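/- Let k, m ≥ 1, let C > 0, and let Ṡ : ℝ → M(k,ℝ) be a measurable family of matrices with ‖Ṡ(t)‖ ≤ C for all t ∈ ℝ. Let u₁, …, u_m : ℝ → ℝᵏ be square-integrable functions that are orthonormal in L²(ℝ,ℝᵏ). Then for every ε > 0 there exists η > 0 such that for all α₁, …, α_m ∈ ℝ, setting u(t) := Σᵢ αᵢ·uᵢ(t), one has | ∫_ℝ ⟨Ṡ(t)·u(t), u(t)⟩ dt − ∫_{−η}^{η} ⟨Ṡ(t)·u(t), u(t)⟩ dt | ≤ ε · ∫_ℝ ‖u(t)‖² dt. -/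

import Mathlib

open scoped RealInnerProductSpace
open MeasureTheory Filter

/-- Let `Ṡ : ℝ → M(k,ℝ)` be a measurable family of matrices (viewed as
operators on `ℝᵏ`) with `‖Ṡ(t)‖ ≤ C`, and let `u₁, …, u_m` be square-integrable functions,
orthonormal in `L²(ℝ,ℝᵏ)`. Then for every `ε > 0` there is `η > 0` such that for all
coefficients `α` and `u := Σᵢ αᵢ uᵢ`,
`|∫_ℝ ⟨Ṡ u, u⟩ − ∫_{−η}^{η} ⟨Ṡ u, u⟩| ≤ ε · ∫_ℝ ‖u‖²`. -/
theorem stmt17 (k m : ℕ) (hk : 1 ≤ k) (hm : 1 ≤ m) (C : ℝ) (hC : 0 < C)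
    (S : ℝ → EuclideanSpace ℝ (Fin k) →L[ℝ] EuclideanSpace ℝ (Fin k))
    (hSmeas : StronglyMeasurable S)
    (hSbound : ∀ t, ‖S t‖ ≤ C)
    (u : Fin m → ℝ → EuclideanSpace ℝ (Fin k))
    (hL2 : ∀ i, MemLp (u i) 2 (volume : Measure ℝ))
    (horth : ∀ i j, ∫ t : ℝ, ⟪u i t, u j t⟫ = if i = j then (1 : ℝ) else 0) :
    ∀ ε > (0 : ℝ), ∃ η > (0 : ℝ), ∀ α : Fin m → ℝ,
      |(∫ t : ℝ, ⟪S t (∑ i, α i • u i t), ∑ i, α i • u i t⟫) -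
          ∫ t in (-η)..η, ⟪S t (∑ i, α i • u i t), ∑ i, α i • u i t⟫| ≤
        ε * ∫ t : ℝ, ‖∑ i, α i • u i t‖ ^ 2 := by
  intro ε hε
  set G : ℝ → ℝ := fun t => ∑ i, ‖u i t‖ ^ 2 with hGdef
  have hGint : Integrable G := by
    exact integrable_finset_sum _ fun i _ => (hL2 i).norm.integrable_sq
  have hGnn : ∀ t, 0 ≤ G t := fun t => Finset.sum_nonneg fun i _ => sq_nonneg _
  -- choose η
  have htend : Tendsto (fun n : ℕ => ∫ t in (-(n : ℝ))..(n : ℝ), G t) atTop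
      (nhds (∫ t, G t)) :=
    intervalIntegral_tendsto_integral hGint
      (tendsto_neg_atTop_atBot.comp tendsto_natCast_atTop_atTop)
      tendsto_natCast_atTop_atTop
  have h0 : Tendsto (fun n : ℕ => (∫ t, G t) - ∫ t in (-(n : ℝ))..(n : ℝ), G t) atTop
      (nhds 0) := by
    simpa using htend.const_sub (∫ t, G t)
  have hev : ∀ᶠ n : ℕ in atTop,
      (∫ t, G t) - (∫ t in (-(n : ℝ))..(n : ℝ), G t) < ε / C := by
    have := h0.eventually (eventually_lt_nhds (show (0:ℝ) < ε / C by positivity))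
    simpa using this
  obtain ⟨n, hn1, hn2⟩ := ((eventually_ge_atTop 1).and hev).exists
  refine ⟨(n : ℝ), by exact_mod_cast hn1, ?_⟩
  have hηpos : (0 : ℝ) < n := by exact_mod_cast hn1
  set s : Set ℝ := Set.Ioc (-(n : ℝ)) (n : ℝ) with hsdef
  have hsm : MeasurableSet s := measurableSet_Ioc
  have htail : ∫ t in sᶜ, G t ≤ ε / C := by
    have h1 : (∫ t in s, G t) + ∫ t in sᶜ, G t = ∫ t, G t :=
      integral_add_compl hsm hGint
    have h2 : (∫ t in (-(n : ℝ))..(n : ℝ), G t) = ∫ t in s, G t :=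
      intervalIntegral.integral_of_le (by linarith)
    rw [h2] at hn2
    linarith
  intro α
  set v : ℝ → EuclideanSpace ℝ (Fin k) := fun t => ∑ i, α i • u i t with hvdef
  set T : ℝ := ∑ i, (α i) ^ 2 with hTdef
  have hTnn : 0 ≤ T := Finset.sum_nonneg fun i _ => sq_nonneg _
  have hv : MemLp v 2 (volume : Measure ℝ) := by
    exact memLp_finset_sum _ fun i _ => (hL2 i).const_smul (α i)
  have hvsq : Integrable (fun t => ‖v t‖ ^ 2) := hv.norm.integrable_sq
  have hvG : ∀ t, ‖v t‖ ^ 2 ≤ T * G t := by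
    intro t
    have h1 : ‖v t‖ ≤ ∑ i, |α i| * ‖u i t‖ := by
      refine (norm_sum_le _ _).trans_eq ?_
      simp [norm_smul]
    have h2 : ‖v t‖ ^ 2 ≤ (∑ i, |α i| * ‖u i t‖) ^ 2 := by
      have := norm_nonneg (v t)
      nlinarith [Finset.sum_nonneg (fun i (_ : i ∈ Finset.univ) =>
        mul_nonneg (abs_nonneg (α i)) (norm_nonneg (u i t)))]
    refine h2.trans ?_
    have h3 := Finset.sum_mul_sq_le_sq_mul_sq Finset.univ (fun i => |α i|)
      (fun i => ‖u i t‖)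
    simpa [sq_abs] using h3
  have hSv : AEStronglyMeasurable (fun t => S t (v t)) (volume : Measure ℝ) := by
    exact (ContinuousLinearMap.apply ℝ (EuclideanSpace ℝ (Fin k))).aestronglyMeasurable_comp₂
      hv.aestronglyMeasurable hSmeas.aestronglyMeasurable
  have hfmeas : AEStronglyMeasurable (fun t => ⟪S t (v t), v t⟫) (volume : Measure ℝ) :=
    hSv.inner hv.aestronglyMeasurable
  have hfbound : ∀ t, |⟪S t (v t), v t⟫| ≤ C * ‖v t‖ ^ 2 := by
    intro t
    calc |⟪S t (v t), v t⟫| ≤ ‖S t (v t)‖ * ‖v t‖ := abs_real_inner_le_norm _ _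
      _ ≤ (C * ‖v t‖) * ‖v t‖ := by
          have h1 : ‖S t (v t)‖ ≤ ‖S t‖ * ‖v t‖ := (S t).le_opNorm _
          have h2 := hSbound t
          have h3 : ‖S t (v t)‖ ≤ C * ‖v t‖ :=
            h1.trans (mul_le_mul_of_nonneg_right h2 (norm_nonneg _))
          exact mul_le_mul_of_nonneg_right h3 (norm_nonneg _)
      _ = C * ‖v t‖ ^ 2 := by ring
  have hfint : Integrable (fun t => ⟪S t (v t), v t⟫) := by
    refine (hvsq.const_mul C).mono' hfmeas (Filter.Eventually.of_forall fun t => ?_)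
    simpa [Real.norm_eq_abs] using hfbound t
  -- rewrite difference as tail integral
  have hsplit : (∫ t : ℝ, ⟪S t (v t), v t⟫) - (∫ t in (-(n:ℝ))..(n:ℝ), ⟪S t (v t), v t⟫)
      = ∫ t in sᶜ, ⟪S t (v t), v t⟫ := by
    rw [intervalIntegral.integral_of_le (by linarith : -(n:ℝ) ≤ (n:ℝ))]
    have := integral_add_compl hsm hfint
    linarith
  -- tail bound
  have htailf : |∫ t in sᶜ, ⟪S t (v t), v t⟫| ≤ (C * T) * ∫ t in sᶜ, G t := by
    have hb : ∀ t : ℝ, ‖(fun t => ⟪S t (v t), v t⟫) t‖ ≤ (fun t => (C * T) * G t) t := by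
      intro t
      have h2 := hvG t
      simp only [Real.norm_eq_abs]
      calc |⟪S t (v t), v t⟫| ≤ C * ‖v t‖ ^ 2 := hfbound t
        _ ≤ C * (T * G t) := by nlinarith
        _ = (C * T) * G t := by ring
    have h1 : |∫ t in sᶜ, ⟪S t (v t), v t⟫| ≤ ∫ t in sᶜ, (C * T) * G t := by
      have := norm_integral_le_of_norm_le ((hGint.const_mul (C * T)).restrict (s := sᶜ))
        (Filter.Eventually.of_forall hb)
      simpa [Real.norm_eq_abs] using this
    rw [integral_const_mul] at h1
    exact h1
  -- norm computation
  have hinner_int : ∀ i j, Integrable (fun t => ⟪u i t, u j t⟫) := by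
    intro i j
    refine ((((hL2 i).norm.integrable_sq).add ((hL2 j).norm.integrable_sq)).const_mul
      (1/2 : ℝ)).mono' (((hL2 i).aestronglyMeasurable.inner (hL2 j).aestronglyMeasurable))
      (Filter.Eventually.of_forall fun t => ?_)
    have h1 : |⟪u i t, u j t⟫| ≤ ‖u i t‖ * ‖u j t‖ := abs_real_inner_le_norm _ _
    have h2 : ‖u i t‖ * ‖u j t‖ ≤ (‖u i t‖ ^ 2 + ‖u j t‖ ^ 2) / 2 := by nlinarith [sq_nonneg (‖u i t‖ - ‖u j t‖)]
    simp only [Real.norm_eq_abs]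
    calc |⟪u i t, u j t⟫| ≤ (‖u i t‖ ^ 2 + ‖u j t‖ ^ 2) / 2 := h1.trans h2
      _ = 1/2 * (‖u i t‖ ^ 2 + ‖u j t‖ ^ 2) := by ring
  have hnormv : (∫ t : ℝ, ‖v t‖ ^ 2) = T := by
    have hexp : ∀ t, ‖v t‖ ^ 2 = ∑ i, ∑ j, (α i * α j) * ⟪u i t, u j t⟫ := by
      intro t
      rw [← real_inner_self_eq_norm_sq]
      simp only [hvdef, inner_sum, sum_inner, real_inner_smul_left, real_inner_smul_right]
      rw [Finset.sum_comm]
      exact Finset.sum_congr rfl fun i _ => Finset.sum_congr rfl fun j _ => by ring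
    calc (∫ t : ℝ, ‖v t‖ ^ 2) = ∫ t : ℝ, ∑ i, ∑ j, (α i * α j) * ⟪u i t, u j t⟫ := by
          simp_rw [hexp]
      _ = ∑ i, ∑ j, ∫ t : ℝ, (α i * α j) * ⟪u i t, u j t⟫ := by
          rw [integral_finset_sum _ fun i _ => integrable_finset_sum _
            fun j _ => (hinner_int i j).const_mul _]
          exact Finset.sum_congr rfl fun i _ => integral_finset_sum _
            fun j _ => (hinner_int i j).const_mul _
      _ = ∑ i, ∑ j, (α i * α j) * ∫ t : ℝ, ⟪u i t, u j t⟫ := by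
          simp_rw [integral_const_mul]
      _ = T := by
          simp_rw [horth]
          simp [hTdef, sq]
  calc |(∫ t : ℝ, ⟪S t (v t), v t⟫) - ∫ t in (-(n:ℝ))..(n:ℝ), ⟪S t (v t), v t⟫|
      = |∫ t in sᶜ, ⟪S t (v t), v t⟫| := by rw [hsplit]
    _ ≤ (C * T) * ∫ t in sᶜ, G t := htailf
    _ ≤ (C * T) * (ε / C) := by
        exact mul_le_mul_of_nonneg_left htail (by positivity)
    _ = ε * T := by field_simp
    _ = ε * ∫ t : ℝ, ‖v t‖ ^ 2 := by rw [hnormv]
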